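/- Characterization of achievable robust competitive ratios for resource allocation with predictions: fix an RRAwP instance and a threshold Φ ≤ 1. There exists an allocation policy guaranteeing ratio Φ if and only if, for every τ ∈ {1,…,T} and all parameter vectors θ, θ′ ∈ ∏_{i=1}^{d} [θ̲_{0,i}, θ̄_{0,i}] with |θ_i − θ′_i| ≤ Δ_{τ,i} for every i ∈ {1,…,d}, one has R_{T+1}(θ) + Σ_{t=τ+1}^{T} V_t ≥ L_{T+1}(θ′). -/

import Mathlib

/-- An instance of the robust resource allocation with predictions (RRAwP) problem. -/
structure RRAwP where
  /-- number of periods -/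
  T : ℕ
  /-- number of unknown parameters -/
  nd : ℕ
  /-- left endpoints of the initial prediction intervals -/
  θlo : ℕ → ℝ
  /-- right endpoints of the initial prediction intervals -/
  θhi : ℕ → ℝ
  /-- prediction-error upper bounds, indexed by period and parameter -/
  Δ : ℕ → ℕ → ℝ
  /-- resource supplies -/
  Vcap : ℕ → ℝ
  /-- the parametric utility function `u(x, y; θ)` -/
  u : ℝ → ℝ → (ℕ → ℝ) → ℝ

namespace RRAwP

variable (M : RRAwP)

/-- The total available resource `V = V_1 + … + V_T`. -/
noncomputable def Vtot : ℝ := ∑ t ∈ Finset.Icc 1 M.T, M.Vcap t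

/-- Membership of a parameter vector in the initial prediction box. -/
def InBox (θ : ℕ → ℝ) : Prop :=
  ∀ i, 1 ≤ i → i ≤ M.nd → M.θlo i ≤ θ i ∧ θ i ≤ M.θhi i

/-- The structural hypotheses on an RRAwP instance. -/
def IsValid : Prop :=
  1 ≤ M.T ∧ 1 ≤ M.nd ∧
  (∀ i, 1 ≤ i → i ≤ M.nd → 0 ≤ M.θlo i ∧ M.θlo i ≤ M.θhi i) ∧
  (∀ t i, 1 ≤ t → t + 1 ≤ M.T → 1 ≤ i → i ≤ M.nd → M.Δ (t + 1) i ≤ M.Δ t i) ∧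
  (∀ t i, 1 ≤ t → t ≤ M.T → 1 ≤ i → i ≤ M.nd → 0 ≤ M.Δ t i) ∧
  (∀ i, 1 ≤ i → i ≤ M.nd → M.Δ 1 i ≤ M.θhi i - M.θlo i) ∧
  (∀ t, 1 ≤ t → t ≤ M.T → 0 ≤ M.Vcap t) ∧
  (∀ θ, M.InBox θ →
    (∀ x y, x ∈ Set.Icc (0 : ℝ) M.Vtot → y ∈ Set.Icc (0 : ℝ) M.Vtot → 0 ≤ M.u x y θ) ∧
    ContinuousOn (fun q : ℝ × ℝ => M.u q.1 q.2 θ)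
      (Set.Icc (0 : ℝ) M.Vtot ×ˢ Set.Icc (0 : ℝ) M.Vtot) ∧
    (∀ x x' y, 0 ≤ x → x ≤ x' → x' ≤ M.Vtot → y ∈ Set.Icc (0 : ℝ) M.Vtot →
      M.u x y θ ≤ M.u x' y θ) ∧
    (∀ x y y', x ∈ Set.Icc (0 : ℝ) M.Vtot → 0 ≤ y → y ≤ y' → y' ≤ M.Vtot →
      M.u x y θ ≤ M.u x y' θ) ∧
    ConcaveOn ℝ (Set.Icc (0 : ℝ) M.Vtot ×ˢ Set.Icc (0 : ℝ) M.Vtot)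
      (fun q : ℝ × ℝ => M.u q.1 q.2 θ))

/-- An admissible scenario: regular multivariate prediction sequences together with a
consistent parameter vector. -/
def Scenario (lo hi : ℕ → ℕ → ℝ) (θ : ℕ → ℝ) : Prop :=
  ∀ i, 1 ≤ i → i ≤ M.nd →
    M.θlo i ≤ lo 1 i ∧ hi 1 i ≤ M.θhi i ∧
    (∀ t, 1 ≤ t → t ≤ M.T → lo t i ≤ hi t i ∧ hi t i - lo t i ≤ M.Δ t i) ∧
    (∀ t, 2 ≤ t → t ≤ M.T → lo (t - 1) i ≤ lo t i ∧ hi t i ≤ hi (t - 1) i) ∧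
    lo M.T i ≤ θ i ∧ θ i ≤ hi M.T i

/-- An allocation policy: its action lies in `[0, V_t]` whenever the input intervals have
lengths at most `Δ_{t,i}`. -/
def IsPolicy (π : ℕ → (ℕ → ℝ) → (ℕ → ℝ) → ℝ → ℝ) : Prop :=
  ∀ t a b x, 1 ≤ t → t ≤ M.T →
    (∀ i, 1 ≤ i → i ≤ M.nd → a i ≤ b i ∧ b i - a i ≤ M.Δ t i) →
    0 ≤ π t a b x ∧ π t a b x ≤ M.Vcap t

/-- The cumulative investments into sector A produced by a decision rule `π`:
`x_1 = 0` and `x_{t+1} = x_t + π_t(([lo_{t,i}, hi_{t,i}])_i, x_t)`. -/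
noncomputable def inv (π : ℕ → (ℕ → ℝ) → (ℕ → ℝ) → ℝ → ℝ) (lo hi : ℕ → ℕ → ℝ) : ℕ → ℝ
  | 0 => 0
  | t + 1 => if t = 0 then 0 else inv π lo hi t + π t (lo t) (hi t) (inv π lo hi t)

/-- The hindsight optimum `opt(θ) = max_{x ∈ [0,V]} u(x, V − x; θ)`. -/
noncomputable def opt (θ : ℕ → ℝ) : ℝ :=
  sSup ((fun x => M.u x (M.Vtot - x) θ) '' Set.Icc (0 : ℝ) M.Vtot)

/-- The policy `π` guarantees competitive ratio `Φ`: on every admissible scenario the final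
allocation achieves utility at least `Φ · opt(θ)`. -/
def Guarantees (π : ℕ → (ℕ → ℝ) → (ℕ → ℝ) → ℝ → ℝ) (Φ : ℝ) : Prop :=
  ∀ lo hi θ, M.Scenario lo hi θ →
    Φ * M.opt θ ≤ M.u (inv π lo hi (M.T + 1)) (M.Vtot - inv π lo hi (M.T + 1)) θ

/-- `L_{T+1}(θ)`: the smallest `x ∈ [0, V]` with `u(x, V−x; θ) ≥ Φ·opt(θ)`. -/
noncomputable def Lfin (Φ : ℝ) (θ : ℕ → ℝ) : ℝ :=
  sInf {x | x ∈ Set.Icc (0 : ℝ) M.Vtot ∧ Φ * M.opt θ ≤ M.u x (M.Vtot - x) θ}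

/-- `R_{T+1}(θ)`: the largest `x ∈ [0, V]` with `u(x, V−x; θ) ≥ Φ·opt(θ)`. -/
noncomputable def Rfin (Φ : ℝ) (θ : ℕ → ℝ) : ℝ :=
  sSup {x | x ∈ Set.Icc (0 : ℝ) M.Vtot ∧ Φ * M.opt θ ≤ M.u x (M.Vtot - x) θ}

end RRAwP

namespace RRAwPAux
open Set Finset

variable {M : RRAwP} {lo hi : ℕ → ℕ → ℝ} {θ : ℕ → ℝ}

lemma vtot_nonneg (hM : M.IsValid) : 0 ≤ M.Vtot :=
  Finset.sum_nonneg fun t ht =>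
    hM.2.2.2.2.2.2.1 t (Finset.mem_Icc.mp ht).1 (Finset.mem_Icc.mp ht).2

/-- The success set. -/
def Sset (M : RRAwP) (Φ : ℝ) (θ : ℕ → ℝ) : Set ℝ :=
  {x | x ∈ Set.Icc (0 : ℝ) M.Vtot ∧ Φ * M.opt θ ≤ M.u x (M.Vtot - x) θ}

lemma sum_Icc_split (f : ℕ → ℝ) {a b : ℕ} (h : a ≤ b) :
    ∑ t ∈ Finset.Icc a b, f t = f a + ∑ t ∈ Finset.Icc (a + 1) b, f t := by
  rw [Finset.Icc_add_one_left_eq_Ioc, Finset.Icc_eq_cons_Ioc h, Finset.sum_cons]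

lemma min_max_identity (x V m : ℝ) (hV : 0 ≤ V) :
    x + min V (max 0 (m - x)) = min (x + V) (max x m) := by
  rcases le_total m x with h | h
  · rw [max_eq_left (sub_nonpos.2 h), max_eq_left h, min_eq_right hV, add_zero,
      min_eq_right (by linarith)]
  · rw [max_eq_right (sub_nonneg.2 h), max_eq_right h]
    rcases le_total V (m - x) with h2 | h2
    · rw [min_eq_left h2, min_eq_left (by linarith)]
    · rw [min_eq_right h2, min_eq_right (by linarith)]; ring

lemma sset_facts (hM : M.IsValid) {Φ : ℝ} (hΦ : Φ ≤ 1) {θ : ℕ → ℝ} (hθ : M.InBox θ) :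
    M.Lfin Φ θ ∈ Sset M Φ θ ∧ M.Rfin Φ θ ∈ Sset M Φ θ ∧
    Set.Icc (M.Lfin Φ θ) (M.Rfin Φ θ) ⊆ Sset M Φ θ ∧
    (∀ x ∈ Sset M Φ θ, M.Lfin Φ θ ≤ x ∧ x ≤ M.Rfin Φ θ) := by
  obtain ⟨hnn, hcont, hmonx, hmony, hconc⟩ := hM.2.2.2.2.2.2.2 θ hθ
  have hV : (0 : ℝ) ≤ M.Vtot := vtot_nonneg hM
  set f : ℝ → ℝ := fun x => M.u x (M.Vtot - x) θ with hf
  have hmaps : Set.MapsTo (fun x : ℝ => (x, M.Vtot - x))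
      (Set.Icc (0 : ℝ) M.Vtot) (Set.Icc (0 : ℝ) M.Vtot ×ˢ Set.Icc (0 : ℝ) M.Vtot) := by
    intro x hx
    show (x, M.Vtot - x) ∈ _
    simp only [Set.mem_prod, Set.mem_Icc]
    exact ⟨⟨hx.1, hx.2⟩, by linarith [hx.2], by linarith [hx.1]⟩
  have hfc : ContinuousOn f (Set.Icc (0 : ℝ) M.Vtot) :=
    hcont.comp ((continuous_id.prodMk (continuous_const.sub continuous_id)).continuousOn) hmaps
  have hIne : (Set.Icc (0 : ℝ) M.Vtot).Nonempty := Set.nonempty_Icc.2 hV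
  obtain ⟨z, hzmem, hzmax⟩ := isCompact_Icc.exists_isMaxOn hIne hfc
  have hzmax' : ∀ y ∈ Set.Icc (0 : ℝ) M.Vtot, f y ≤ f z := fun y hy => hzmax hy
  have hzV : M.Vtot - z ∈ Set.Icc (0 : ℝ) M.Vtot := ⟨by linarith [hzmem.2], by linarith [hzmem.1]⟩
  have hfznn : 0 ≤ f z := hnn z (M.Vtot - z) hzmem hzV
  have himg : f z ∈ (fun x => M.u x (M.Vtot - x) θ) '' Set.Icc (0 : ℝ) M.Vtot := ⟨z, hzmem, rfl⟩
  have hbddimg : BddAbove ((fun x => M.u x (M.Vtot - x) θ) '' Set.Icc (0 : ℝ) M.Vtot) := by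
    refine ⟨f z, ?_⟩; rintro w ⟨y, hy, rfl⟩; exact hzmax' y hy
  have hopt_le : M.opt θ ≤ f z := by
    apply Real.sSup_le _ hfznn
    rintro w ⟨y, hy, rfl⟩; exact hzmax' y hy
  have hopt_ge : f z ≤ M.opt θ := le_csSup hbddimg himg
  have hoptnn : 0 ≤ M.opt θ := hfznn.trans hopt_ge
  have hΦopt : Φ * M.opt θ ≤ M.opt θ := mul_le_of_le_one_left hoptnn hΦ
  have hne : (Sset M Φ θ).Nonempty := ⟨z, hzmem, hΦopt.trans hopt_le⟩
  have hclosed : IsClosed (Sset M Φ θ) := by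
    have h : Sset M Φ θ =
        Set.Icc (0 : ℝ) M.Vtot ∩ f ⁻¹' Set.Ici (Φ * M.opt θ) := rfl
    rw [h]
    exact hfc.preimage_isClosed_of_isClosed isClosed_Icc isClosed_Ici
  have hconcf : ConcaveOn ℝ (Set.Icc (0 : ℝ) M.Vtot) f := by
    refine ⟨convex_Icc _ _, ?_⟩
    intro x hx y hy a b ha hb hab
    have hkey := hconc.2 (hmaps hx) (hmaps hy) ha hb hab
    have heq : a • ((x, M.Vtot - x) : ℝ × ℝ) + b • ((y, M.Vtot - y) : ℝ × ℝ)
        = (a * x + b * y, M.Vtot - (a * x + b * y)) := by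
      simp only [Prod.smul_mk, Prod.mk_add_mk, smul_eq_mul, Prod.mk.injEq]
      exact ⟨trivial, by linear_combination M.Vtot * hab⟩
    simp only [] at hkey
    rw [heq] at hkey
    simpa [f, smul_eq_mul] using hkey
  have hcvx : Convex ℝ (Sset M Φ θ) := by
    have h := hconcf.convex_ge (Φ * M.opt θ)
    convert h using 1
    rfl
  have hbdd : BddAbove (Sset M Φ θ) := ⟨M.Vtot, fun x hx => hx.1.2⟩
  have hbddb : BddBelow (Sset M Φ θ) := ⟨0, fun x hx => hx.1.1⟩
  have hLmem : M.Lfin Φ θ ∈ Sset M Φ θ := hclosed.csInf_mem hne hbddb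
  have hRmem : M.Rfin Φ θ ∈ Sset M Φ θ := hclosed.csSup_mem hne hbdd
  refine ⟨hLmem, hRmem, ?_, fun x hx => ⟨csInf_le hbddb hx, le_csSup hbdd hx⟩⟩
  exact fun x hx => hcvx.ordConnected.out hLmem hRmem hx

lemma delta_mono (hM : M.IsValid) {s i : ℕ} (h1 : 1 ≤ s) (hi1 : 1 ≤ i) (hi2 : i ≤ M.nd) :
    ∀ t, s ≤ t → t ≤ M.T → M.Δ t i ≤ M.Δ s i := by
  intro t hst
  induction t, hst using Nat.le_induction with
  | base => intro _; exact le_rfl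
  | succ n hn ih =>
    intro hT
    exact (hM.2.2.2.1 n i (h1.trans hn) hT hi1 hi2).trans (ih (by omega))

lemma scenario_nested (hs : M.Scenario lo hi θ) {s i : ℕ} (h1 : 1 ≤ s)
    (hi1 : 1 ≤ i) (hi2 : i ≤ M.nd) :
    ∀ t, s ≤ t → t ≤ M.T → lo s i ≤ lo t i ∧ hi t i ≤ hi s i := by
  intro t hst
  induction t, hst using Nat.le_induction with
  | base => intro _; exact ⟨le_rfl, le_rfl⟩
  | succ n hn ih =>
    intro hT
    have hstep := ((hs i hi1 hi2).2.2.2.1 (n + 1) (by omega) hT)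
    have h' := ih (by omega)
    simp only [Nat.add_sub_cancel] at hstep
    exact ⟨h'.1.trans hstep.1, hstep.2.trans h'.2⟩

lemma scenario_inbox (hM : M.IsValid) (hs : M.Scenario lo hi θ) : M.InBox θ := by
  intro i h1 h2
  obtain ⟨ha, hb, _, _, he, hf⟩ := hs i h1 h2
  have h := scenario_nested hs le_rfl h1 h2 M.T hM.1 le_rfl
  exact ⟨ha.trans (h.1.trans he), hf.trans (h.2.trans hb)⟩

lemma inv_bounds {π} (hπ : M.IsPolicy π) (hs : M.Scenario lo hi θ) {τ : ℕ} :
    ∀ s, τ ≤ s → s ≤ M.T →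
      RRAwP.inv π lo hi (τ + 1) ≤ RRAwP.inv π lo hi (s + 1) ∧
      RRAwP.inv π lo hi (s + 1) ≤ RRAwP.inv π lo hi (τ + 1)
        + ∑ t ∈ Finset.Icc (τ + 1) s, M.Vcap t := by
  intro s hτs
  induction s, hτs using Nat.le_induction with
  | base => intro _; simp
  | succ n hn ih =>
    intro hsT
    obtain ⟨ih1, ih2⟩ := ih (by omega)
    have hstep : RRAwP.inv π lo hi (n + 1 + 1) = RRAwP.inv π lo hi (n + 1)
        + π (n + 1) (lo (n + 1)) (hi (n + 1)) (RRAwP.inv π lo hi (n + 1)) := by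
      simp [RRAwP.inv]
    have hb := hπ (n + 1) (lo (n + 1)) (hi (n + 1)) (RRAwP.inv π lo hi (n + 1))
      (by omega) hsT (fun i hi1 hi2 => (hs i hi1 hi2).2.2.1 (n + 1) (by omega) hsT)
    have hsum : ∑ t ∈ Finset.Icc (τ + 1) (n + 1), M.Vcap t
        = ∑ t ∈ Finset.Icc (τ + 1) n, M.Vcap t + M.Vcap (n + 1) :=
      Finset.sum_Icc_succ_top (by omega) _
    constructor
    · rw [hstep]; linarith [hb.1]
    · rw [hstep, hsum]; linarith [hb.2]

end RRAwPAux

namespace RRAwPAux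
lemma inv_congr {π : ℕ → (ℕ → ℝ) → (ℕ → ℝ) → ℝ → ℝ} {lo hi lo' hi' : ℕ → ℕ → ℝ} :
    ∀ s, (∀ t, 1 ≤ t → t < s → lo t = lo' t ∧ hi t = hi' t) →
      RRAwP.inv π lo hi s = RRAwP.inv π lo' hi' s := by
  intro s
  induction s with
  | zero => intro _; rfl
  | succ n ih =>
    intro h
    by_cases h0 : n = 0
    · subst h0; simp [RRAwP.inv]
    · have hl := h n (by omega) (by omega)
      have hih := ih fun t ht1 ht2 => h t ht1 (by omega)
      simp only [RRAwP.inv, if_neg h0]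
      rw [hih, hl.1, hl.2]
end RRAwPAux

/-- **Proposition (Characterization of achievable robust competitive ratios for RRAwP).**
For `Φ ≤ 1`, an allocation policy guaranteeing ratio `Φ` exists if and only if for every
`τ ∈ {1,…,T}` and all `θ, θ′` in the initial prediction box with `|θ_i − θ′_i| ≤ Δ_{τ,i}`
for all `i`, one has `R_{T+1}(θ) + Σ_{t=τ+1}^{T} V_t ≥ L_{T+1}(θ′)`. -/
theorem rrawp_ratio_characterization (M : RRAwP) (hM : M.IsValid) (Φ : ℝ) (hΦ : Φ ≤ 1) :
    (∃ π, M.IsPolicy π ∧ M.Guarantees π Φ) ↔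
    (∀ τ θ θ', 1 ≤ τ → τ ≤ M.T → M.InBox θ → M.InBox θ' →
      (∀ i, 1 ≤ i → i ≤ M.nd → |θ i - θ' i| ≤ M.Δ τ i) →
      M.Lfin Φ θ' ≤ M.Rfin Φ θ + ∑ t ∈ Finset.Icc (τ + 1) M.T, M.Vcap t) := by
  have hT := hM.1
  have hVnn := hM.2.2.2.2.2.2.1
  have hΔnn := hM.2.2.2.2.1
  constructor
  · rintro ⟨π, hπ, hg⟩ τ θ θ' hτ1 hτT hθ hθ' hclose
    set a : ℕ → ℝ := fun i => min (θ i) (θ' i) with ha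
    set b : ℕ → ℝ := fun i => max (θ i) (θ' i) with hb
    have key : ∀ ψ : ℕ → ℝ, (∀ i, 1 ≤ i → i ≤ M.nd → a i ≤ ψ i ∧ ψ i ≤ b i) →
        M.Scenario (fun t i => if t ≤ τ then a i else ψ i)
          (fun t i => if t ≤ τ then b i else ψ i) ψ := by
      intro ψ hψ i hi1 hi2
      have hθi := hθ i hi1 hi2
      have hθ'i := hθ' i hi1 hi2
      have habi : a i ≤ b i := (min_le_left _ _).trans (le_max_left _ _)
      have hdiff : b i - a i ≤ M.Δ τ i := by
        rw [ha, hb]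
        simp only []
        rw [max_sub_min_eq_abs, abs_sub_comm]
        exact hclose i hi1 hi2
      refine ⟨?_, ?_, ?_, ?_, ?_, ?_⟩
      · simp only [if_pos hτ1]; exact le_min hθi.1 hθ'i.1
      · simp only [if_pos hτ1]; exact max_le hθi.2 hθ'i.2
      · intro t ht1 ht2
        by_cases h : t ≤ τ
        · simp only [if_pos h]
          exact ⟨habi, hdiff.trans (RRAwPAux.delta_mono hM ht1 hi1 hi2 τ h hτT)⟩
        · simp only [if_neg h]
          exact ⟨le_rfl, by simpa using hΔnn t i ht1 ht2 hi1 hi2⟩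
      · intro t ht1 ht2
        by_cases h : t ≤ τ
        · have h' : t - 1 ≤ τ := by omega
          simp only [if_pos h, if_pos h']
          exact ⟨le_rfl, le_rfl⟩
        · by_cases h' : t - 1 ≤ τ
          · simp only [if_neg h, if_pos h']
            exact ⟨(hψ i hi1 hi2).1, (hψ i hi1 hi2).2⟩
          · simp only [if_neg h, if_neg h']
            exact ⟨le_rfl, le_rfl⟩
      · by_cases h : M.T ≤ τ
        · simp only [if_pos h]; exact (hψ i hi1 hi2).1
        · simp only [if_neg h]; exact le_rfl
      · by_cases h : M.T ≤ τ
        · simp only [if_pos h]; exact (hψ i hi1 hi2).2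
        · simp only [if_neg h]; exact le_rfl
    have sc1 := key θ (fun i _ _ => ⟨min_le_left _ _, le_max_left _ _⟩)
    have sc2 := key θ' (fun i _ _ => ⟨min_le_right _ _, le_max_right _ _⟩)
    have hmem : ∀ (lof hif : ℕ → ℕ → ℝ) (ψ : ℕ → ℝ), M.Scenario lof hif ψ →
        RRAwP.inv π lof hif (M.T + 1) ∈ RRAwPAux.Sset M Φ ψ := by
      intro lof hif ψ hsc
      have h1 := RRAwPAux.inv_bounds hπ hsc (τ := 0) M.T (Nat.zero_le _) le_rfl
      have h0 : RRAwP.inv π lof hif (0 + 1) = 0 := by simp [RRAwP.inv]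
      rw [h0] at h1
      have h2 : ∑ t ∈ Finset.Icc (0 + 1) M.T, M.Vcap t = M.Vtot := by
        norm_num [RRAwP.Vtot]
      simp only [RRAwPAux.Sset, Set.mem_setOf_eq, Set.mem_Icc]
      refine ⟨⟨h1.1, by linarith [h1.2]⟩, hg lof hif ψ hsc⟩
    have hm1 := hmem _ _ _ sc1
    have hm2 := hmem _ _ _ sc2
    have hfacts1 := RRAwPAux.sset_facts hM hΦ hθ
    have hfacts2 := RRAwPAux.sset_facts hM hΦ hθ'
    obtain ⟨hL2, -⟩ := hfacts2.2.2.2 _ hm2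
    obtain ⟨-, hR1⟩ := hfacts1.2.2.2 _ hm1
    have heq' : RRAwP.inv π (fun t i => if t ≤ τ then a i else θ i)
          (fun t i => if t ≤ τ then b i else θ i) (τ + 1)
        = RRAwP.inv π (fun t i => if t ≤ τ then a i else θ' i)
          (fun t i => if t ≤ τ then b i else θ' i) (τ + 1) := by
      apply RRAwPAux.inv_congr
      intro t ht1 ht2
      have htτ : t ≤ τ := by omega
      constructor <;> · funext i; simp only [if_pos htτ]
    have hb1 := RRAwPAux.inv_bounds hπ sc1 M.T hτT le_rfl
    have hb2 := RRAwPAux.inv_bounds hπ sc2 M.T hτT le_rfl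
    linarith [hb1.1, hb2.2, hL2, hR1, heq']
  · intro H
    classical
    set π : ℕ → (ℕ → ℝ) → (ℕ → ℝ) → ℝ → ℝ := fun t A B x =>
      min (M.Vcap t) (max 0 ((sSup {w | ∃ ψ, M.InBox ψ ∧
        (∀ i, 1 ≤ i → i ≤ M.nd → A i ≤ ψ i ∧ ψ i ≤ B i) ∧ w = M.Lfin Φ ψ}
        - ∑ s ∈ Finset.Icc (t + 1) M.T, M.Vcap s) - x)) with hπdef
    have hπ : M.IsPolicy π := by
      intro t A B x ht1 ht2 hAB
      exact ⟨le_min (hVnn t ht1 ht2) (le_max_left _ _), min_le_left _ _⟩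
    refine ⟨π, hπ, ?_⟩
    intro lo hi θ hs
    have hθbox : M.InBox θ := RRAwPAux.scenario_inbox hM hs
    have C : ∀ t, t ≤ M.T → ∀ ψ, M.InBox ψ →
        (∀ i, 1 ≤ i → i ≤ M.nd → (if t = 0 then M.θlo i else lo t i) ≤ ψ i ∧
          ψ i ≤ (if t = 0 then M.θhi i else hi t i)) →
        M.Lfin Φ ψ - ∑ s ∈ Finset.Icc (t + 1) M.T, M.Vcap s ≤ RRAwP.inv π lo hi (t + 1) ∧
        RRAwP.inv π lo hi (t + 1) ≤ M.Rfin Φ ψ := by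
      intro t
      induction t with
      | zero =>
        intro _ ψ hψbox _
        have hf := RRAwPAux.sset_facts hM hΦ hψbox
        have hL := hf.1.1
        have hR := hf.2.1.1
        have h1 : RRAwP.inv π lo hi (0 + 1) = 0 := by simp [RRAwP.inv]
        rw [h1]
        have h3 : M.Vtot = ∑ s ∈ Finset.Icc (0 + 1) M.T, M.Vcap s := by
          norm_num [RRAwP.Vtot]
        exact ⟨by linarith [hL.2], hR.1⟩
      | succ n ih =>
        intro hnT1 ψ hψbox hψmem
        have hnT : n ≤ M.T := by omega
        have hψmem' : ∀ i, 1 ≤ i → i ≤ M.nd → lo (n + 1) i ≤ ψ i ∧ ψ i ≤ hi (n + 1) i := by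
          intro i hi1 hi2
          have hm := hψmem i hi1 hi2
          simpa only [if_neg (Nat.succ_ne_zero n)] using hm
        have hprev : ∀ i, 1 ≤ i → i ≤ M.nd →
            (if n = 0 then M.θlo i else lo n i) ≤ ψ i ∧
            ψ i ≤ (if n = 0 then M.θhi i else hi n i) := by
          intro i hi1 hi2
          have hm := hψmem' i hi1 hi2
          by_cases h0 : n = 0
          · subst h0
            obtain ⟨hα, hβ, -, -, -, -⟩ := hs i hi1 hi2
            simp only [if_pos rfl]
            exact ⟨hα.trans hm.1, hm.2.trans hβ⟩
          · have hnest := (hs i hi1 hi2).2.2.2.1 (n + 1) (by omega) hnT1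
            simp only [Nat.add_sub_cancel] at hnest
            simp only [if_neg h0]
            exact ⟨hnest.1.trans hm.1, hm.2.trans hnest.2⟩
        obtain ⟨pre1, pre2⟩ := ih hnT ψ hψbox hprev
        have hf := RRAwPAux.sset_facts hM hΦ hψbox
        have hRnn : (0 : ℝ) ≤ M.Rfin Φ ψ := hf.2.1.1.1
        have hrestnn : (0 : ℝ) ≤ ∑ s ∈ Finset.Icc (n + 1 + 1) M.T, M.Vcap s :=
          Finset.sum_nonneg fun t ht => by
            have hm := Finset.mem_Icc.mp ht
            exact hVnn t (by omega) hm.2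
        have hub : ∀ w ∈ {w | ∃ ψ', M.InBox ψ' ∧ (∀ i, 1 ≤ i → i ≤ M.nd →
              lo (n + 1) i ≤ ψ' i ∧ ψ' i ≤ hi (n + 1) i) ∧ w = M.Lfin Φ ψ'},
            w ≤ M.Rfin Φ ψ + ∑ s ∈ Finset.Icc (n + 1 + 1) M.T, M.Vcap s := by
          rintro w ⟨ψ', hbox', hmem', rfl⟩
          have hcl : ∀ i, 1 ≤ i → i ≤ M.nd → |ψ i - ψ' i| ≤ M.Δ (n + 1) i := by
            intro i hi1 hi2
            have h1 := hψmem' i hi1 hi2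
            have h2 := hmem' i hi1 hi2
            have h3 := (hs i hi1 hi2).2.2.1 (n + 1) (by omega) hnT1
            rw [abs_le]
            constructor
            · linarith [h1.1, h2.2, h3.2]
            · linarith [h1.2, h2.1, h3.2]
          exact H (n + 1) ψ ψ' (by omega) hnT1 hψbox hbox' hcl
        have hsuple : sSup {w | ∃ ψ', M.InBox ψ' ∧ (∀ i, 1 ≤ i → i ≤ M.nd →
              lo (n + 1) i ≤ ψ' i ∧ ψ' i ≤ hi (n + 1) i) ∧ w = M.Lfin Φ ψ'}
            ≤ M.Rfin Φ ψ + ∑ s ∈ Finset.Icc (n + 1 + 1) M.T, M.Vcap s :=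
          Real.sSup_le hub (by linarith)
        have hLsup : M.Lfin Φ ψ ≤ sSup {w | ∃ ψ', M.InBox ψ' ∧ (∀ i, 1 ≤ i → i ≤ M.nd →
              lo (n + 1) i ≤ ψ' i ∧ ψ' i ≤ hi (n + 1) i) ∧ w = M.Lfin Φ ψ'} :=
          le_csSup ⟨_, hub⟩ ⟨ψ, hψbox, hψmem', rfl⟩
        have hstep : RRAwP.inv π lo hi (n + 1 + 1) = RRAwP.inv π lo hi (n + 1)
            + π (n + 1) (lo (n + 1)) (hi (n + 1)) (RRAwP.inv π lo hi (n + 1)) := by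
          simp [RRAwP.inv]
        set x := RRAwP.inv π lo hi (n + 1) with hx
        set m := sSup {w | ∃ ψ', M.InBox ψ' ∧ (∀ i, 1 ≤ i → i ≤ M.nd →
              lo (n + 1) i ≤ ψ' i ∧ ψ' i ≤ hi (n + 1) i) ∧ w = M.Lfin Φ ψ'}
            - ∑ s ∈ Finset.Icc (n + 1 + 1) M.T, M.Vcap s with hm
        have hπval : π (n + 1) (lo (n + 1)) (hi (n + 1)) x
            = min (M.Vcap (n + 1)) (max 0 (m - x)) := rfl
        have hid : x + min (M.Vcap (n + 1)) (max 0 (m - x))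
            = min (x + M.Vcap (n + 1)) (max x m) :=
          RRAwPAux.min_max_identity _ _ _ (hVnn (n + 1) (by omega) hnT1)
        have hsumsplit : ∑ s ∈ Finset.Icc (n + 1) M.T, M.Vcap s
            = M.Vcap (n + 1) + ∑ s ∈ Finset.Icc (n + 1 + 1) M.T, M.Vcap s :=
          RRAwPAux.sum_Icc_split _ hnT1
        rw [hstep, hπval, hid]
        constructor
        · apply le_min
          · rw [hsumsplit] at pre1
            linarith [pre1]
          · refine le_max_of_le_right ?_
            linarith [hLsup, hm.le, hm.ge]
        · refine (min_le_right _ _).trans (max_le pre2 ?_)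
          linarith [hsuple, hm.le, hm.ge]
    have hC := C M.T le_rfl θ hθbox ?_
    · have hf := RRAwPAux.sset_facts hM hΦ hθbox
      have hempty : Finset.Icc (M.T + 1) M.T = ∅ := Finset.Icc_eq_empty (by omega)
      rw [hempty, Finset.sum_empty, sub_zero] at hC
      have hmem := hf.2.2.1 (Set.mem_Icc.mpr ⟨hC.1, hC.2⟩)
      exact hmem.2
    · intro i hi1 hi2
      have hTne : M.T ≠ 0 := by omega
      simp only [if_neg hTne]
      exact ⟨(hs i hi1 hi2).2.2.2.2.1, (hs i hi1 hi2).2.2.2.2.2⟩
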